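/- Let n ≥ 2. For each partition λ of n let C_λ be the real matrix with rows and columns indexed by S_n whose (g,h)-entry is the number of left cosets of Young subgroups of shape λ containing both g and h. Then the family of matrices { C_λ : λ a partition of n } is linearly independent over ℝ. -/

import Mathlib

open scoped Pointwise

/-- `P` is an ordered set partition of `Ω = Fin n`: a list of pairwise disjoint
nonempty subsets of `Fin n` whose union is all of `Fin n`. -/
def IsOSP (n : ℕ) (P : List (Finset (Fin n))) : Prop :=
  P.Pairwise Disjoint ∧ (∀ s ∈ P, s.Nonempty) ∧ P.foldr (· ∪ ·) ∅ = Finset.univ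

/-- `l` is an integer partition of `n`: a weakly decreasing list of positive
integers summing to `n`. -/
def IsPartition (n : ℕ) (l : List ℕ) : Prop :=
  l.Pairwise (· ≥ ·) ∧ (∀ x ∈ l, 0 < x) ∧ l.sum = n

/-- The permutation `g` maps the ordered set partition `P` to `Q`, i.e. `g Pᵢ = Qᵢ`
for all `i` (in particular the lists have the same length). -/
def MapsOSP {n : ℕ} (g : Equiv.Perm (Fin n)) (P Q : List (Finset (Fin n))) : Prop :=
  List.Forall₂ (fun s t => s.image g = t) P Q

/-- Dominance order on partitions: `Dominance l m` means `l ⊴ m`. -/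
def Dominated (l m : List ℕ) : Prop :=
  ∀ j : ℕ, ((l.take j).sum ≤ (m.take j).sum)

/-- A subgroup `G ≤ S_n` is `λ`-transitive if any ordered set partition of shape `λ`
can be mapped to any other by some element of `G`. -/
def IsLamTransGroup {n : ℕ} (G : Subgroup (Equiv.Perm (Fin n))) (lam : List ℕ) : Prop :=
  ∀ P Q : List (Finset (Fin n)), IsOSP n P → IsOSP n Q →
    P.map Finset.card = lam → Q.map Finset.card = lam → ∃ g ∈ G, MapsOSP g P Q

/-- A set `D ⊆ S_n` is `λ`-transitive if there is a constant `r` such that for any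
two ordered set partitions `P, Q` of shape `λ`, exactly `r` elements of `D` map `P` to `Q`. -/
def IsLamTransSet {n : ℕ} (D : Set (Equiv.Perm (Fin n))) (lam : List ℕ) : Prop :=
  ∃ r : ℕ, ∀ P Q : List (Finset (Fin n)), IsOSP n P → IsOSP n Q →
    P.map Finset.card = lam → Q.map Finset.card = lam →
      {g ∈ D | MapsOSP g P Q}.ncard = r

/-- The Young subgroup of the ordered set partition `P`: all permutations fixing
each block of `P` setwise. -/
def YoungSubgroup {n : ℕ} (P : List (Finset (Fin n))) : Subgroup (Equiv.Perm (Fin n)) where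
  carrier := {g | ∀ s ∈ P, s.image g = s}
  one_mem' := by intro s hs; simp
  mul_mem' := by
    intro a b ha hb s hs
    have : ⇑(a * b) = ⇑a ∘ ⇑b := rfl
    rw [this, ← Finset.image_image, hb s hs, ha s hs]
  inv_mem' := by
    intro a ha s hs
    have h1 : s.image ⇑a = s := ha s hs
    conv_lhs => rw [← h1]
    rw [Finset.image_image]
    have : (⇑a⁻¹ ∘ ⇑a) = id := by
      funext x
      simp
    rw [this, Finset.image_id]

/-- `cosetCount n lam g h`: the number of left cosets of Young subgroups of shape `lam`
containing both permutations `g` and `h`. -/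
noncomputable def cosetCount (n : ℕ) (lam : List ℕ) (g h : Equiv.Perm (Fin n)) : ℕ :=
  {C : Set (Equiv.Perm (Fin n)) |
    (∃ (a : Equiv.Perm (Fin n)) (P : List (Finset (Fin n))),
      IsOSP n P ∧ P.map Finset.card = lam ∧
      C = a • (YoungSubgroup P : Set (Equiv.Perm (Fin n)))) ∧ g ∈ C ∧ h ∈ C}.ncard

/-- The matrix `C_λ`, with rows and columns indexed by `S_n`, whose `(g,h)`-entry is the
number of left cosets of Young subgroups of shape `λ` containing both `g` and `h`. -/
noncomputable def Cmatrix (n : ℕ) (lam : List ℕ) :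
    Matrix (Equiv.Perm (Fin n)) (Equiv.Perm (Fin n)) ℝ :=
  fun g h => (cosetCount n lam g h : ℝ)

/-- The family of matrices `{C_λ : λ a partition of n}` is linearly independent over `ℝ`. -/
lemma mem_foldr_union {n : ℕ} (P : List (Finset (Fin n))) (x : Fin n) :
    x ∈ P.foldr (· ∪ ·) ∅ ↔ ∃ s ∈ P, x ∈ s := by
  induction P with
  | nil => simp
  | cons a t ih => simp [ih]

open Fin.NatCast in
lemma rotate_closed {m : ℕ} (t : Finset (Fin m)) (ht : t.Nonempty)
    (hinv : ∀ j ∈ t, finRotate m j ∈ t) : t = Finset.univ := by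
  cases m with
  | zero => exact ht.elim (fun j _ => j.elim0)
  | succ m' =>
    obtain ⟨j0, hj0⟩ := ht
    have key : ∀ d : ℕ, j0 + (d : Fin (m'+1)) ∈ t := by
      intro d
      induction d with
      | zero => simpa using hj0
      | succ d ih =>
        have := hinv _ ih
        rw [finRotate_succ_apply] at this
        have harr : j0 + ((d:ℕ)+1 : ℕ) = j0 + (d : Fin (m'+1)) + 1 := by
          push_cast; rw [add_assoc]
        rwa [harr]
    apply Finset.eq_univ_of_forall
    intro y
    have := key (y - j0).val
    rwa [Fin.cast_val_eq_self, add_sub_cancel] at this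

lemma finset_key {α : Type*} [DecidableEq α] (OS PS : Finset (Finset α))
    (hPdisj : (PS : Set (Finset α)).Pairwise Disjoint)
    (hOne : ∀ A ∈ OS, A.Nonempty)
    (hsub : ∀ B ∈ PS, ∃ A ∈ OS, A ⊆ B)
    (hsum : ∑ B ∈ PS, B.card = ∑ A ∈ OS, A.card) :
    PS.card ≤ OS.card ∧ (OS.card ≤ PS.card → PS = OS) := by
  classical
  set g : Finset α → Finset α :=
    fun B => if h : ∃ A ∈ OS, A ⊆ B then h.choose else ∅ with hg
  have hgmem : ∀ B ∈ PS, g B ∈ OS := by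
    intro B hB
    have h := hsub B hB
    simp only [hg, dif_pos h]
    exact h.choose_spec.1
  have hgsub : ∀ B ∈ PS, g B ⊆ B := by
    intro B hB
    have h := hsub B hB
    simp only [hg, dif_pos h]
    exact h.choose_spec.2
  have hinj : ∀ B ∈ PS, ∀ B' ∈ PS, g B = g B' → B = B' := by
    intro B hB B' hB' hgeq
    by_contra hne
    have hdisj := hPdisj hB hB' hne
    have hne2 : (g B).Nonempty := hOne _ (hgmem B hB)
    obtain ⟨x, hx⟩ := hne2
    exact (Finset.disjoint_left.mp hdisj (hgsub B hB hx)
      (hgsub B' hB' (hgeq ▸ hx)))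
  have hcardle : PS.card ≤ OS.card :=
    Finset.card_le_card_of_injOn g hgmem hinj
  refine ⟨hcardle, fun hle => ?_⟩
  have hcard : PS.card = OS.card := le_antisymm hcardle hle
  have himg : PS.image g = OS := by
    apply Finset.eq_of_subset_of_card_le
    · intro A hA
      obtain ⟨B, hB, rfl⟩ := Finset.mem_image.mp hA
      exact hgmem B hB
    · rw [Finset.card_image_of_injOn hinj, hcard]
  have hsum2 : ∑ B ∈ PS, (g B).card = ∑ A ∈ OS, A.card := by
    rw [← himg, Finset.sum_image hinj]
  have hle2 : ∀ B ∈ PS, (g B).card ≤ B.card :=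
    fun B hB => Finset.card_le_card (hgsub B hB)
  have heach : ∀ B ∈ PS, (g B).card = B.card := by
    rw [← Finset.sum_eq_sum_iff_of_le hle2]
    omega
  have hfix : ∀ B ∈ PS, g B = B := fun B hB =>
    Finset.eq_of_subset_of_card_le (hgsub B hB) (heach B hB).ge
  apply Finset.eq_of_subset_of_card_le _ hle
  intro B hB
  rw [← hfix B hB]; exact hgmem B hB

lemma osp_nodup {n : ℕ} {P : List (Finset (Fin n))} (h : IsOSP n P) : P.Nodup := by
  refine h.1.imp_of_mem ?_
  intro a b ha _ hd
  intro hab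
  subst hab
  obtain ⟨x, hx⟩ := h.2.1 a ha
  exact Finset.disjoint_left.mp hd hx hx

lemma disjoint_foldr {n : ℕ} (s : Finset (Fin n)) (L : List (Finset (Fin n)))
    (h : ∀ t ∈ L, Disjoint s t) : Disjoint s (L.foldr (· ∪ ·) ∅) := by
  rw [Finset.disjoint_left]
  intro x hxs hxu
  obtain ⟨t, ht, hxt⟩ := (mem_foldr_union L x).mp hxu
  exact Finset.disjoint_left.mp (h t ht) hxs hxt

lemma card_foldr {n : ℕ} (P : List (Finset (Fin n))) (h : P.Pairwise Disjoint) :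
    (P.foldr (· ∪ ·) ∅).card = (P.map Finset.card).sum := by
  induction P with
  | nil => simp
  | cons a t ih =>
    simp only [List.foldr_cons, List.map_cons, List.sum_cons]
    rw [Finset.card_union_of_disjoint (disjoint_foldr a t (List.pairwise_cons.mp h).1),
      ih (List.pairwise_cons.mp h).2]

lemma osp_sum {n : ℕ} {P : List (Finset (Fin n))} (h : IsOSP n P) :
    ∑ B ∈ P.toFinset, B.card = n := by
  rw [List.sum_toFinset _ (osp_nodup h), ← card_foldr P h.1, h.2.2, Finset.card_univ,
    Fintype.card_fin]

lemma exists_good (n : ℕ) (lam : List ℕ) (h : IsPartition n lam) :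
    ∃ (σ : Equiv.Perm (Fin n)) (O : List (Finset (Fin n))),
      IsOSP n O ∧ O.map Finset.card = lam ∧
      (∀ s ∈ O, s.image σ = s) ∧
      (∀ s ∈ O, ∀ t : Finset (Fin n), (∀ a ∈ t, σ a ∈ t) →
        (∃ x ∈ t, x ∈ s) → s ⊆ t) := by
  classical
  set k := lam.length with hk
  set li : Fin k → ℕ := fun i => lam.get i with hli
  have hcard : Fintype.card (Σ i : Fin k, Fin (li i)) = n := by
    rw [Fintype.card_sigma]
    simp only [Fintype.card_fin, hli]
    exact (Fin.sum_univ_getElem lam).trans h.2.2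
  set e : (Σ i : Fin k, Fin (li i)) ≃ Fin n := Fintype.equivFinOfCardEq hcard with he
  set ρ : Equiv.Perm (Σ i : Fin k, Fin (li i)) :=
    Equiv.sigmaCongrRight (fun i => finRotate (li i)) with hρ
  set σ : Equiv.Perm (Fin n) := (e.symm.trans ρ).trans e with hσ
  have hσap : ∀ p : (Σ i : Fin k, Fin (li i)), σ (e p) = e ⟨p.1, finRotate _ p.2⟩ := by
    intro p
    simp [hσ, hρ, Equiv.sigmaCongrRight]
  set B : Fin k → Finset (Fin n) :=
    fun i => Finset.univ.image (fun j : Fin (li i) => e ⟨i, j⟩) with hB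
  have hmemB : ∀ (i : Fin k) (j : Fin (li i)), e ⟨i, j⟩ ∈ B i := by
    intro i j
    rw [hB]
    exact Finset.mem_image_of_mem _ (Finset.mem_univ j)
  have hmem_iff : ∀ (x : Fin n) (i : Fin k), x ∈ B i → ∃ j : Fin (li i), e ⟨i, j⟩ = x := by
    intro x i hx
    rw [hB] at hx
    obtain ⟨j, _, hj⟩ := Finset.mem_image.mp hx
    exact ⟨j, hj⟩
  have hfst : ∀ (x : Fin n) (i : Fin k), x ∈ B i → (e.symm x).1 = i := by
    intro x i hx
    obtain ⟨j, rfl⟩ := hmem_iff x i hx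
    simp
  have hcov : ∀ x : Fin n, x ∈ B (e.symm x).1 := by
    intro x
    have h1 := hmemB (e.symm x).1 (e.symm x).2
    rwa [Sigma.eta, Equiv.apply_symm_apply] at h1
  set O : List (Finset (Fin n)) := (List.finRange k).map B with hO
  have hBinO : ∀ i : Fin k, B i ∈ O := by
    intro i; rw [hO]; exact List.mem_map_of_mem (List.mem_finRange i)
  have hOB : ∀ s ∈ O, ∃ i, s = B i := by
    intro s hs
    rw [hO] at hs
    obtain ⟨i, _, rfl⟩ := List.mem_map.mp hs
    exact ⟨i, rfl⟩
  have hlipos : ∀ i, 0 < li i := fun i => h.2.1 _ (lam.get_mem i)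
  have hBne : ∀ i, (B i).Nonempty := fun i => ⟨e ⟨i, ⟨0, hlipos i⟩⟩, hmemB i _⟩
  have hOSP : IsOSP n O := by
    refine ⟨?_, ?_, ?_⟩
    · rw [hO, List.pairwise_map]
      refine (List.nodup_finRange k).imp_of_mem ?_
      intro i i' _ _ hne
      rw [Finset.disjoint_left]
      intro x hx hx'
      exact hne ((hfst x i hx) ▸ (hfst x i' hx'))
    · intro s hs; obtain ⟨i, rfl⟩ := hOB s hs; exact hBne i
    · apply Finset.eq_univ_of_forall
      intro x
      rw [mem_foldr_union]
      exact ⟨B (e.symm x).1, hBinO _, hcov x⟩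
  have hBcard : ∀ i, (B i).card = li i := by
    intro i
    rw [hB]
    rw [Finset.card_image_of_injective _ (fun a b hab => by
      have := e.injective hab
      exact (Sigma.mk.inj_iff.mp this).2.eq)]
    simp
  have hshape : O.map Finset.card = lam := by
    rw [hO, List.map_map]
    have : Finset.card ∘ B = lam.get := by funext i; exact hBcard i
    rw [this, List.map_get_finRange]
  have hinv : ∀ s ∈ O, s.image σ = s := by
    intro s hs
    obtain ⟨i, rfl⟩ := hOB s hs
    apply Finset.eq_of_subset_of_card_le
    · intro x hx
      obtain ⟨y, hy, rfl⟩ := Finset.mem_image.mp hx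
      obtain ⟨j, rfl⟩ := hmem_iff y i hy
      rw [hσap ⟨i, j⟩]
      exact hmemB i _
    · rw [Finset.card_image_of_injective _ σ.injective]
  refine ⟨σ, O, hOSP, hshape, hinv, ?_⟩
  rintro s hs t htinv ⟨x, hxt, hxs⟩
  obtain ⟨i, rfl⟩ := hOB s hs
  set t' : Finset (Fin (li i)) := Finset.univ.filter (fun j => e ⟨i, j⟩ ∈ t) with ht'
  have ht'inv : ∀ j ∈ t', finRotate (li i) j ∈ t' := by
    intro j hj
    rw [ht', Finset.mem_filter] at hj ⊢
    refine ⟨Finset.mem_univ _, ?_⟩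
    have := htinv _ hj.2
    rwa [hσap ⟨i, j⟩] at this
  have ht'ne : t'.Nonempty := by
    obtain ⟨j, rfl⟩ := hmem_iff x i hxs
    exact ⟨j, by rw [ht', Finset.mem_filter]; exact ⟨Finset.mem_univ _, hxt⟩⟩
  have huniv := rotate_closed t' ht'ne ht'inv
  intro y hy
  obtain ⟨j, rfl⟩ := hmem_iff y i hy
  have hj : j ∈ t' := huniv ▸ Finset.mem_univ j
  rw [ht', Finset.mem_filter] at hj
  exact hj.2


theorem Cmatrix_linearIndependent (n : ℕ) (hn : 2 ≤ n) :
    LinearIndependent ℝ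
      (fun lam : {l : List ℕ // IsPartition n l} => Cmatrix n lam.val) := by
  classical
  rw [linearIndependent_iff]
  intro c hc
  by_contra hcne
  have hsupp : c.support.Nonempty := Finsupp.support_nonempty_iff.mpr hcne
  obtain ⟨lam0, hlam0mem, hmin⟩ :=
    Finset.exists_min_image c.support (fun l => l.val.length) hsupp
  obtain ⟨σ, O, hOSP, hshape, hOinv, hOmin⟩ := exists_good n lam0.val lam0.2
  have hσY : σ ∈ YoungSubgroup O := hOinv
  have hcover : ∀ x : Fin n, ∃ A ∈ O, x ∈ A := by
    intro x
    have : x ∈ O.foldr (· ∪ ·) ∅ := hOSP.2.2 ▸ Finset.mem_univ x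
    exact (mem_foldr_union O x).mp this
  -- Claim B : vanishing for other partitions of length ≥ length lam0
  have claimB : ∀ lam : {l : List ℕ // IsPartition n l}, lam ∈ c.support →
      lam ≠ lam0 → cosetCount n lam.val 1 σ = 0 := by
    intro lam hmem hne
    by_contra h0
    obtain ⟨C, ⟨⟨a, P, hPosp, hPshape, rfl⟩, h1C, hσC⟩⟩ :=
      Set.nonempty_of_ncard_ne_zero h0
    -- σ belongs to the Young subgroup of P
    have haY : a ∈ YoungSubgroup P := by
      have := mem_leftCoset_iff a |>.mp h1C
      have h2 : a⁻¹ ∈ YoungSubgroup P := by simpa using this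
      simpa using (YoungSubgroup P).inv_mem h2
    have hσP : σ ∈ YoungSubgroup P := by
      have := mem_leftCoset_iff a |>.mp hσC
      have := (YoungSubgroup P).mul_mem haY this
      simpa using this
    have hPinv : ∀ s ∈ P, ∀ x ∈ s, σ x ∈ s := by
      intro s hs x hx
      have himg : s.image σ = s := hσP s hs
      rw [← himg]
      exact Finset.mem_image_of_mem _ hx
    -- apply the counting lemma
    have hkey := finset_key O.toFinset P.toFinset
      (by
        intro A hA B hB hAB
        exact (List.Pairwise.forall hPosp.1)
          (List.mem_toFinset.mp hA) (List.mem_toFinset.mp hB) hAB)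
      (fun A hA => hOSP.2.1 A (List.mem_toFinset.mp hA))
      (by
        intro B hB
        have hBP := List.mem_toFinset.mp hB
        obtain ⟨x, hx⟩ := hPosp.2.1 B hBP
        obtain ⟨A, hAO, hxA⟩ := hcover x
        refine ⟨A, List.mem_toFinset.mpr hAO, ?_⟩
        exact hOmin A hAO B (hPinv B hBP) ⟨x, hx, hxA⟩)
      (by rw [osp_sum hPosp, osp_sum hOSP])
    have hPcard : P.toFinset.card = P.length :=
      List.toFinset_card_of_nodup (osp_nodup hPosp)
    have hOcard : O.toFinset.card = O.length :=
      List.toFinset_card_of_nodup (osp_nodup hOSP)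
    have hlenP : P.length = lam.val.length := by
      rw [← hPshape, List.length_map]
    have hlenO : O.length = lam0.val.length := by
      rw [← hshape, List.length_map]
    have hminlen : lam0.val.length ≤ lam.val.length := hmin lam hmem
    have hcardeq : O.toFinset.card ≤ P.toFinset.card := by omega
    have hfineq : P.toFinset = O.toFinset := hkey.2 hcardeq
    have hperm : List.Perm P O := List.perm_of_nodup_nodup_toFinset_eq
      (osp_nodup hPosp) (osp_nodup hOSP) hfineq
    have hpermc : List.Perm lam.val lam0.val := by
      rw [← hPshape, ← hshape]
      exact hperm.map Finset.card
    have : lam.val = lam0.val :=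
      List.Perm.eq_of_pairwise (fun _ _ _ _ h1 h2 => le_antisymm h2 h1) lam.2.1 lam0.2.1 hpermc
    exact hne (Subtype.ext this)
  -- Claim A : positivity for lam0
  have claimA : cosetCount n lam0.val 1 σ ≠ 0 := by
    have hmem : (YoungSubgroup O : Set (Equiv.Perm (Fin n))) ∈
        {C : Set (Equiv.Perm (Fin n)) |
          (∃ (a : Equiv.Perm (Fin n)) (P : List (Finset (Fin n))),
            IsOSP n P ∧ P.map Finset.card = lam0.val ∧
            C = a • (YoungSubgroup P : Set (Equiv.Perm (Fin n)))) ∧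
          (1 : Equiv.Perm (Fin n)) ∈ C ∧ σ ∈ C} := by
      refine ⟨⟨1, O, hOSP, hshape, (one_smul _ _).symm⟩, ?_, hσY⟩
      exact (YoungSubgroup O).one_mem
    have hpos : 0 < cosetCount n lam0.val 1 σ := by
      rw [cosetCount, Set.ncard_pos (Set.toFinite _)]
      exact ⟨_, hmem⟩
    omega
  -- evaluate the linear combination at (1, σ)
  rw [Finsupp.linearCombination_apply] at hc
  have heval : ∑ lam ∈ c.support,
      c lam * (cosetCount n lam.val 1 σ : ℝ) = 0 := by
    have h2 : (c.sum fun lam a => a • Cmatrix n lam.val) 1 σ = 0 := by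
      rw [hc]; rfl
    rw [Finsupp.sum] at h2
    rw [Matrix.sum_apply] at h2
    simpa [Cmatrix, Matrix.smul_apply, smul_eq_mul] using h2
  rw [Finset.sum_eq_single_of_mem lam0 hlam0mem (by
    intro lam hmem hne
    rw [claimB lam hmem hne]
    simp)] at heval
  have hc0 : c lam0 ≠ 0 := Finsupp.mem_support_iff.mp hlam0mem
  have : (cosetCount n lam0.val 1 σ : ℝ) ≠ 0 := by
    exact_mod_cast claimA
  exact hc0 (by
    rcases mul_eq_zero.mp heval with h | h
    · exact h
    · exact absurd h this)
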